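/- Single-relay MSE comparison (Theorem 4.1): Let K ≥ 1 devices have nonzero channels h_k (to the AP) and g_k (to the relay), the relay have nonzero channel f to the AP, with powers P₀, P_r > 0 and noise σ² > 0, and equal weights ρ = 1/K. Define SNR_k = P₀|h_k|²/σ², SNR_{k,relay} = P₀|g_k|²/σ², SNR_relay-AP = P_r|f|²/σ², and δ = (min_k SNR_k)/(min_k SNR_{k,relay}). If δ ≤ 1 and SNR_relay-AP ≥ (K·min_k SNR_k + δ)/(1 + √(2 − 2δ))², then there exists a feasible point (a_{k,1}, a_{k,2}, b, c₁=0, c₂) of the single-relay problem — satisfying |a_{k,1}|² ≤ P₀, |a_{k,2}|² ≤ P₀, and |b|²(∑_k |g_k|²|a_{k,1}|² + σ²) ≤ P_r — whose MSE objective ∑_k |c₁ h_k a_{k,1} + c₂ f b g_k a_{k,1} + c₂ h_k a_{k,2} − ρ|² + (|c₁|² + |c₂|² + |c₂|²|f|²|b|²)σ² is at most (ρ²σ²/(2P₀)) max_k 1/|h_k|², the minimal MSE of the no-relay scheme. -/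

import Mathlib

open Finset

set_option maxHeartbeats 1000000 in
theorem stmt_12 (K : ℕ) (hK : 1 ≤ K) (P0 Pr σ2 : ℝ) (hP0 : 0 < P0) (hPr : 0 < Pr)
    (hσ : 0 < σ2) (h g : Fin K → ℂ) (hh : ∀ k, h k ≠ 0) (hg : ∀ k, g k ≠ 0)
    (f : ℂ) (hf : f ≠ 0) :
    let ne : (Finset.univ : Finset (Fin K)).Nonempty := Finset.univ_nonempty_iff.mpr ⟨⟨0, hK⟩⟩
    let ρ : ℝ := 1 / K
    let minSNR : ℝ := Finset.univ.inf' ne (fun k => P0 * ‖h k‖ ^ 2 / σ2)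
    let minSNRrelay : ℝ := Finset.univ.inf' ne (fun k => P0 * ‖g k‖ ^ 2 / σ2)
    let SNRrAP : ℝ := Pr * ‖f‖ ^ 2 / σ2
    let δ : ℝ := minSNR / minSNRrelay
    δ ≤ 1 →
    SNRrAP ≥ (K * minSNR + δ) / (1 + Real.sqrt (2 - 2 * δ)) ^ 2 →
    ∃ (a1 a2 : Fin K → ℂ) (b c1 c2 : ℂ),
      c1 = 0 ∧
      (∀ k, ‖a1 k‖ ^ 2 ≤ P0) ∧
      (∀ k, ‖a2 k‖ ^ 2 ≤ P0) ∧
      ‖b‖ ^ 2 * (∑ k, ‖g k‖ ^ 2 * ‖a1 k‖ ^ 2 + σ2) ≤ Pr ∧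
      ∑ k, ‖c1 * h k * a1 k + c2 * f * b * g k * a1 k + c2 * h k * a2 k - (ρ : ℂ)‖ ^ 2
        + (‖c1‖ ^ 2 + ‖c2‖ ^ 2 + ‖c2‖ ^ 2 * ‖f‖ ^ 2 * ‖b‖ ^ 2) * σ2
        ≤ ρ ^ 2 * σ2 / (2 * P0) * Finset.univ.sup' ne (fun k => 1 / ‖h k‖ ^ 2) := by
  intro ne ρ minSNR minSNRrelay SNRrAP δ hδ1 hSNR
  have hKpos : (0:ℝ) < (K:ℝ) := by exact_mod_cast Nat.lt_of_lt_of_le Nat.zero_lt_one hK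
  have hρ : 0 < ρ := by simp only [ρ]; positivity
  have hhk : ∀ k, (0:ℝ) < ‖h k‖ ^ 2 := fun k => pow_pos (norm_pos_iff.mpr (hh k)) 2
  have hgk : ∀ k, (0:ℝ) < ‖g k‖ ^ 2 := fun k => pow_pos (norm_pos_iff.mpr (hg k)) 2
  have hfpos : (0:ℝ) < ‖f‖ ^ 2 := pow_pos (norm_pos_iff.mpr hf) 2
  obtain ⟨k₀, -, hk₀⟩ := Finset.exists_mem_eq_sup' ne (fun k => 1 / ‖h k‖ ^ 2)
  obtain ⟨k₁, -, hk₁⟩ := Finset.exists_mem_eq_inf' ne (fun k => P0 * ‖g k‖ ^ 2 / σ2)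
  set Hv : ℝ := ‖h k₀‖ ^ 2 with hHv
  set Gv : ℝ := ‖g k₁‖ ^ 2 with hGv
  have hH : 0 < Hv := hhk k₀
  have hG : 0 < Gv := hgk k₁
  have hHle : ∀ k, Hv ≤ ‖h k‖ ^ 2 := by
    intro k
    have h1 : 1 / ‖h k‖ ^ 2 ≤ 1 / Hv := by
      rw [← hk₀]
      exact Finset.le_sup' (fun k => 1 / ‖h k‖ ^ 2) (Finset.mem_univ k)
    rw [div_le_div_iff₀ (hhk k) hH] at h1
    linarith
  have hGle : ∀ k, Gv ≤ ‖g k‖ ^ 2 := by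
    intro k
    have h1 : P0 * Gv / σ2 ≤ P0 * ‖g k‖ ^ 2 / σ2 := by
      rw [← hk₁]
      exact Finset.inf'_le (fun k => P0 * ‖g k‖ ^ 2 / σ2) (Finset.mem_univ k)
    rw [div_le_div_iff₀ hσ hσ] at h1
    nlinarith [mul_pos hP0 hσ]
  have hminSNR : minSNR = P0 * Hv / σ2 := by
    refine le_antisymm (Finset.inf'_le _ (Finset.mem_univ k₀)) ?_
    refine Finset.le_inf' _ _ (fun k _ => ?_)
    have := hHle k
    gcongr
  have hminG : minSNRrelay = P0 * Gv / σ2 := hk₁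
  have hδeq : δ = Hv / Gv := by
    show minSNR / minSNRrelay = Hv / Gv
    rw [hminSNR, hminG]
    rw [div_div_div_cancel_right₀]
    · exact mul_div_mul_left _ _ (ne_of_gt hP0)
    · exact hσ.ne'
  have hd1 : Hv / Gv ≤ 1 := hδeq ▸ hδ1
  have hSNR2 : ((K:ℝ) * (P0 * Hv / σ2) + Hv / Gv)
      / (1 + Real.sqrt (2 - 2 * (Hv / Gv))) ^ 2 ≤ Pr * ‖f‖ ^ 2 / σ2 := by
    have h0 := hSNR
    rw [ge_iff_le, hδeq, hminSNR] at h0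
    exact h0
  rw [hk₀]
  clear hδ1 hSNR hδeq hminSNR hminG hk₀ hk₁
  clear δ SNRrAP minSNRrelay minSNR
  clear_value ρ Hv Gv
  clear hHv hGv
  -- nonzeroness facts
  have hσne := hσ.ne'
  have hP0ne := hP0.ne'
  have hHne := hH.ne'
  have hGne := hG.ne'
  have hρne := hρ.ne'
  have hfne : ‖f‖ ≠ 0 := ne_of_gt (norm_pos_iff.mpr hf)
  have hfabs : ‖f‖ ≠ 0 := hfne
  have hgabs : ∀ k, ‖g k‖ ≠ 0 := fun k => by
    exact ne_of_gt (norm_pos_iff.mpr (hg k))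
  have hhabs : ∀ k, ‖h k‖ ≠ 0 := fun k => by
    exact ne_of_gt (norm_pos_iff.mpr (hh k))
  -- the sqrt parameter
  set s : ℝ := Real.sqrt (2 - 2 * (Hv / Gv)) with hsdef
  have hs0 : 0 ≤ s := Real.sqrt_nonneg _
  have hs2 : s ^ 2 = 2 - 2 * (Hv / Gv) := Real.sq_sqrt (by linarith)
  clear_value s
  clear hsdef
  have h2s : (0:ℝ) < 2 + s := by linarith
  have h1s : (0:ℝ) < 1 + s := by linarith
  have h1sne : (1:ℝ) + s ≠ 0 := ne_of_gt h1s
  set l : ℝ := 1 / (2 + s) with hldef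
  have hl : 0 < l := by rw [hldef]; positivity
  have h1l : 0 < 1 - l := by
    have : l < 1 := by rw [hldef, div_lt_one h2s]; linarith
    linarith
  have hlne : l ≠ 0 := ne_of_gt hl
  have h1lne : (1:ℝ) - l ≠ 0 := ne_of_gt h1l
  have hl2 : l * (2 + s) = 1 := by
    rw [hldef]; field_simp
  have hlrel : 1 - l = (1 + s) * l := by
    rw [hldef]; field_simp; ring
  clear_value l
  clear hldef
  have ekey : 2 * (1 + s) ^ 2 + 2 * (Hv / Gv) = (2 + s) ^ 2 := by
    linear_combination hs2
  have hs2' : s ^ 2 * Gv = 2 * Gv - 2 * Hv := by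
    rw [hs2]; field_simp
  have ekey2 : 2 * (1 + s) ^ 2 * Gv + 2 * Hv = (2 + s) ^ 2 * Gv := by
    linear_combination hs2'
  have hkey2 : 2 * (1 - l) ^ 2 * Gv + 2 * l ^ 2 * Hv = Gv := by
    rw [hlrel]
    linear_combination l ^ 2 * ekey2 + (l * (2 + s) + 1) * Gv * hl2
  -- the scalars
  set t : ℝ := (1 - l) ^ 2 * ρ ^ 2 / (P0 * Hv) with htdef
  set x : ℝ := l ^ 2 * (Hv / Gv) / (1 - l) ^ 2 with hxdef
  have ht : 0 < t := by
    rw [htdef]; exact div_pos (by positivity) (by positivity)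
  have hx : 0 < x := by
    rw [hxdef]
    exact div_pos (mul_pos (by positivity) (div_pos hH hG)) (by positivity)
  have htx : t * x = l ^ 2 * ρ ^ 2 / (P0 * Gv) := by
    rw [htdef, hxdef]
    field_simp
  have hxval : x = (Hv / Gv) / (1 + s) ^ 2 := by
    rw [hxdef, hlrel]
    field_simp
  clear_value t x
  clear hxdef
  set c2 : ℂ := ((Real.sqrt t : ℝ) : ℂ) with hc2def
  set b : ℂ := ((Real.sqrt x / ‖f‖ : ℝ) : ℂ) with hbdef
  have hc2n : ‖c2‖ ^ 2 = t := by
    rw [hc2def, Complex.norm_real, Real.norm_eq_abs, sq_abs, Real.sq_sqrt ht.le]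
  have hbn : ‖b‖ ^ 2 = x / ‖f‖ ^ 2 := by
    rw [hbdef, Complex.norm_real, Real.norm_eq_abs, sq_abs, div_pow, Real.sq_sqrt hx.le]
  have hc2ne : c2 ≠ 0 := by
    rw [hc2def]
    exact_mod_cast ne_of_gt (Real.sqrt_pos.mpr ht)
  have hbne : b ≠ 0 := by
    rw [hbdef]
    have hb0 : (0:ℝ) < Real.sqrt x / ‖f‖ :=
      div_pos (Real.sqrt_pos.mpr hx) (norm_pos_iff.mpr hf)
    exact_mod_cast ne_of_gt hb0
  clear_value c2 b
  clear hc2def hbdef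
  have hdenn : ∀ k : Fin K, ‖c2 * f * b * g k‖ ^ 2 = t * x * ‖g k‖ ^ 2 := by
    intro k
    rw [norm_mul, norm_mul, norm_mul, mul_pow, mul_pow, mul_pow, hc2n, hbn]
    field_simp [hfabs]
  have ha1n : ∀ k : Fin K, ‖((l * ρ : ℝ) : ℂ) / (c2 * f * b * g k)‖ ^ 2
      = P0 * Gv / ‖g k‖ ^ 2 := by
    intro k
    rw [norm_div, div_pow, hdenn k, Complex.norm_real, Real.norm_eq_abs, sq_abs, htx]
    field_simp [hgabs k]
  have ha2n : ∀ k : Fin K, ‖(((1 - l) * ρ : ℝ) : ℂ) / (c2 * h k)‖ ^ 2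
      = P0 * Hv / ‖h k‖ ^ 2 := by
    intro k
    rw [norm_div, div_pow, norm_mul, mul_pow, hc2n, Complex.norm_real,
      Real.norm_eq_abs, sq_abs, htdef]
    field_simp [hhabs k]
  refine ⟨fun k => ((l * ρ : ℝ) : ℂ) / (c2 * f * b * g k),
          fun k => (((1 - l) * ρ : ℝ) : ℂ) / (c2 * h k),
          b, 0, c2, rfl, ?_, ?_, ?_, ?_⟩
  · intro k
    rw [ha1n k, div_le_iff₀ (hgk k)]
    nlinarith [hGle k]
  · intro k
    rw [ha2n k, div_le_iff₀ (hhk k)]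
    nlinarith [hHle k]
  · -- relay power constraint
    have hsum : ∑ k, ‖g k‖ ^ 2 * ‖((l * ρ : ℝ) : ℂ) / (c2 * f * b * g k)‖ ^ 2
        = (K:ℝ) * (P0 * Gv) := by
      rw [Finset.sum_congr rfl (fun k _ => by
        rw [ha1n k, mul_div_cancel₀ _ (ne_of_gt (hgk k))])]
      rw [Finset.sum_const, Finset.card_univ, Fintype.card_fin, nsmul_eq_mul]
    rw [hsum, hbn, div_mul_eq_mul_div, div_le_iff₀ hfpos]
    have hchain : x * ((K:ℝ) * (P0 * Gv) + σ2)
        = σ2 * (((K:ℝ) * (P0 * Hv / σ2) + Hv / Gv) / (1 + s) ^ 2) := by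
      rw [hxval]
      field_simp
    rw [hchain]
    calc σ2 * (((K:ℝ) * (P0 * Hv / σ2) + Hv / Gv) / (1 + s) ^ 2)
        ≤ σ2 * (Pr * ‖f‖ ^ 2 / σ2) := by gcongr
      _ = Pr * ‖f‖ ^ 2 := by field_simp
  · -- the MSE objective
    have hzero : ∀ k ∈ (Finset.univ : Finset (Fin K)),
        ‖(0:ℂ) * h k * (((l * ρ : ℝ) : ℂ) / (c2 * f * b * g k))
          + c2 * f * b * g k * (((l * ρ : ℝ) : ℂ) / (c2 * f * b * g k))
          + c2 * h k * ((((1 - l) * ρ : ℝ) : ℂ) / (c2 * h k)) - (ρ : ℂ)‖ ^ 2 = 0 := by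
      intro k _
      have hne1 : c2 * f * b * g k ≠ 0 :=
        mul_ne_zero (mul_ne_zero (mul_ne_zero hc2ne hf) hbne) (hg k)
      have hne2 : c2 * h k ≠ 0 := mul_ne_zero hc2ne (hh k)
      have he : (0:ℂ) * h k * (((l * ρ : ℝ) : ℂ) / (c2 * f * b * g k))
          + c2 * f * b * g k * (((l * ρ : ℝ) : ℂ) / (c2 * f * b * g k))
          + c2 * h k * ((((1 - l) * ρ : ℝ) : ℂ) / (c2 * h k)) - (ρ : ℂ) = 0 := by
        rw [zero_mul, zero_mul, zero_add, mul_div_cancel₀ _ hne1, mul_div_cancel₀ _ hne2]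
        push_cast
        ring
      rw [he, norm_zero]
      norm_num
    rw [Finset.sum_eq_zero hzero, hc2n, hbn, norm_zero]
    have hfx : t * ‖f‖ ^ 2 * (x / ‖f‖ ^ 2) = t * x := by
      field_simp [hfabs]
    rw [hfx]
    have htx1 : (t + t * x) * σ2 = ρ ^ 2 * σ2 / (2 * P0) * (1 / Hv) := by
      rw [htx, htdef]
      field_simp
      linear_combination hkey2
    refine le_of_eq ?_
    linear_combination htx1
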